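/- Let 𝔷 and Z_* be as in the context. For all r, s ≥ 1, in the ring of multivariate formal power series over ℂ in variables X_1,…,X_{r+s}, one has Z_*(X_1,…,X_r) · Z_*(X_{r+1},…,X_{r+s}) = ∑_{α ∈ qs [X_1,…,X_r] [X_{r+1},…,X_{r+s}]} Z_*(α), where qs is the quasi-shuffle product on lists of power series with respect to addition of power series (so each entry of each list α in the multiset qs [X_1,…,X_r] [X_{r+1},…,X_{r+s}] is a sum of distinct variables X_n). -/

import Mathlib

open scoped BigOperators

/-- The quasi-shuffle (harmonic) product of two words. -/
def qs {M : Type*} [AddCommMonoid M] : List M → List M → Multiset (List M)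
  | [], w => {w}
  | a :: u, [] => {a :: u}
  | a :: u, b :: v =>
      (qs u (b :: v)).map (a :: ·) + (qs (a :: u) v).map (b :: ·) +
        (qs u v).map (fun w => (a + b) :: w)
termination_by u v => u.length + v.length
decreasing_by all_goals (simp; try omega)


lemma qs_map {M N : Type*} [AddCommMonoid M] [AddCommMonoid N] (f : M →+ N) :
    ∀ u v : List M, qs (u.map f) (v.map f) = (qs u v).map (List.map ⇑f)
  | [], w => by simp [qs]
  | a :: u, [] => by simp [qs]
  | a :: u, b :: v => by
      have h1 := qs_map f u (b :: v)
      have h2 := qs_map f (a :: u) v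
      have h3 := qs_map f u v
      simp only [List.map_cons] at h1 h2
      simp only [List.map_cons, qs, h1, h2, h3, Multiset.map_map, Multiset.map_add]
      simp [Function.comp_def, map_add]
  termination_by u v => u.length + v.length

lemma qs_sum {M : Type*} [AddCommMonoid M] :
    ∀ u v : List M, ∀ γ ∈ qs u v, γ.sum = u.sum + v.sum
  | [], w => by simp [qs]
  | a :: u, [] => by simp [qs]
  | a :: u, b :: v => by
      intro γ hγ
      simp only [qs, Multiset.mem_add, Multiset.mem_map] at hγ
      rcases hγ with (⟨δ, hδ, rfl⟩ | ⟨δ, hδ, rfl⟩) | ⟨δ, hδ, rfl⟩ <;>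
        simp [List.sum_cons, qs_sum _ _ δ hδ] <;> abel
  termination_by u v => u.length + v.length

noncomputable def Ff (n : ℕ) : (Fin n → ℕ) →+ MvPowerSeries (Fin n) ℂ where
  toFun c := ∑ i, c i • MvPowerSeries.X i
  map_zero' := by simp
  map_add' c c' := by simp [add_smul, Finset.sum_add_distrib]

def Gd {n : ℕ} (d : Fin n →₀ ℕ) : (Fin n → ℕ) →+ ℕ where
  toFun c := ∑ i, d i * c i
  map_zero' := by simp
  map_add' c c' := by simp [Nat.mul_add, Finset.sum_add_distrib]

lemma Ff_single {n : ℕ} (i0 : Fin n) : Ff n (Pi.single i0 1) = MvPowerSeries.X i0 := by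
  simp only [Ff, AddMonoidHom.coe_mk, ZeroHom.coe_mk, Pi.single_apply]
  rw [Finset.sum_congr rfl (fun i _ => by rw [ite_smul])]
  simp [Finset.sum_ite_eq' Finset.univ i0]

lemma Gd_single {n : ℕ} (d : Fin n →₀ ℕ) (i0 : Fin n) : Gd d (Pi.single i0 1) = d i0 := by
  simp only [Gd, AddMonoidHom.coe_mk, ZeroHom.coe_mk, Pi.single_apply]
  rw [Finset.sum_congr rfl (fun i _ => by rw [mul_ite, mul_one, mul_zero])]
  simp [Finset.sum_ite_eq' Finset.univ i0]


/-- The generating series `Z_*(u₁,…,u_m)` of `𝔷`, for power series `uⱼ`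
with zero constant term; its coefficient at a monomial `d` is the (finite) sum
`∑_k 𝔷([k₁,…,k_m]) · coeff d (∏ⱼ (-uⱼ)^{kⱼ}/kⱼ!)`. -/
noncomputable def Zstar {n : ℕ} (z : List ℕ → ℂ) (u : List (MvPowerSeries (Fin n) ℂ)) :
    MvPowerSeries (Fin n) ℂ :=
  fun d => ∑ k ∈ Fintype.piFinset (fun _ : Fin u.length => Finset.range ((∑ i, d i) + 1)),
    z (List.ofFn k) *
      MvPowerSeries.coeff d
        (∏ j : Fin u.length, (((k j).factorial : ℂ))⁻¹ • (-(u.get j)) ^ (k j))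



lemma coeff_Zstar_ofFn {n m : ℕ} (z : List ℕ → ℂ) (g : Fin m → MvPowerSeries (Fin n) ℂ)
    (d : Fin n →₀ ℕ) :
    MvPowerSeries.coeff d (Zstar z (List.ofFn g)) =
      ∑ k ∈ Fintype.piFinset (fun _ : Fin m => Finset.range ((∑ i, d i) + 1)),
        z (List.ofFn k) *
          MvPowerSeries.coeff d (∏ j, (((k j).factorial : ℂ))⁻¹ • (-(g j)) ^ (k j)) := by
  have hL : (List.ofFn g).length = m := List.length_ofFn (f := g)
  show Zstar z (List.ofFn g) d = _
  rw [Zstar]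
  refine Finset.sum_equiv (Equiv.arrowCongr (finCongr hL) (Equiv.refl ℕ)) ?_ ?_
  · intro k
    simp only [Fintype.mem_piFinset, Equiv.arrowCongr_apply, Equiv.coe_refl, Function.comp_apply,
      id_eq]
    constructor
    · intro h j; exact h _
    · intro h j; simpa using h (finCongr hL j)
  · intro k hk
    congr 1
    · congr 1
      refine List.ext_get (by simp) fun i h1 h2 => ?_
      simp only [List.get_ofFn]
      congr 1
    · congr 1
      refine (Fintype.prod_equiv (finCongr hL) _ _ fun j => ?_)
      simp [List.get_ofFn, Equiv.arrowCongr, finCongr]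
      rfl

lemma prod_X_pow {n : ℕ} (s : Finset (Fin n)) (E : Fin n → ℕ) :
    (∏ i ∈ s, (MvPowerSeries.X i : MvPowerSeries (Fin n) ℂ) ^ E i) =
      MvPowerSeries.monomial (∑ i ∈ s, Finsupp.single i (E i)) 1 := by
  induction s using Finset.cons_induction with
  | empty => simp
  | cons a s ha ih =>
      rw [Finset.prod_cons, Finset.sum_cons, ih, MvPowerSeries.X_pow_eq,
        MvPowerSeries.monomial_mul_monomial, one_mul]

lemma sum_single_apply {n : ℕ} (E : Fin n → ℕ) (i' : Fin n) :
    (∑ i, Finsupp.single i (E i)) i' = E i' := by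
  rw [Finsupp.finset_sum_apply]
  rw [Finset.sum_congr rfl (fun i _ => Finsupp.single_apply)]
  simp [Finset.sum_ite_eq' Finset.univ i']

lemma coeff_prod_pow {n m : ℕ} (b : Fin m → Fin n → ℕ) (hb : ∀ i, ∑ j, b j i ≤ 1)
    (k : Fin m → ℕ) (d : Fin n →₀ ℕ) :
    MvPowerSeries.coeff d (∏ j, (Ff n (b j)) ^ (k j)) =
      if (∀ j, k j = ∑ i, d i * b j i) ∧ (∀ i, d i ≠ 0 → ∃ j, b j i ≠ 0)
      then (∏ j, ((k j).factorial : ℂ)) * ∏ i, (((d i).factorial : ℂ))⁻¹ else 0 := by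
  classical
  have hb1 : ∀ j i, b j i ≤ 1 := fun j i =>
    le_trans (Finset.single_le_sum (f := fun j => b j i) (fun _ _ => Nat.zero_le _)
      (Finset.mem_univ j)) (hb i)
  have hdisj2 : ∀ (i : Fin n) (j j' : Fin m), j ≠ j' → b j i ≠ 0 → b j' i ≠ 0 → False := by
    intro i j j' hne hj hj'
    have h2 : b j i + b j' i ≤ ∑ j'', b j'' i := by
      have h := Finset.sum_le_sum_of_subset (f := fun j'' => b j'' i)
        (Finset.subset_univ ({j, j'} : Finset (Fin m)))
      rwa [Finset.sum_pair hne] at h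
    have := hb i
    omega
  set S : Fin m → Finset (Fin n) := fun j => Finset.univ.filter (fun i => b j i ≠ 0) with hS
  have hmemS : ∀ j i, i ∈ S j ↔ b j i ≠ 0 := by intro j i; simp [hS]
  have hbS : ∀ j, ∀ i ∈ S j, b j i = 1 := fun j i hi =>
    le_antisymm (hb1 j i) (Nat.one_le_iff_ne_zero.2 ((hmemS j i).1 hi))
  -- step 1 : Ff n (b j) is the sum of the variables in S j
  have hF : ∀ j, Ff n (b j) = ∑ i ∈ S j, MvPowerSeries.X i := by
    intro j
    show (∑ i, b j i • MvPowerSeries.X i) = _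
    rw [show (∑ i, b j i • (MvPowerSeries.X i : MvPowerSeries (Fin n) ℂ))
        = ∑ i ∈ S j, b j i • MvPowerSeries.X i from
      (Finset.sum_filter_of_ne (fun i _ hne => by
        intro h0; apply hne; rw [h0, zero_smul])).symm]
    exact Finset.sum_congr rfl fun i hi => by rw [hbS j i hi, one_smul]
  -- step 2 : expand the product of powers
  rw [Finset.prod_congr rfl fun j (_ : j ∈ Finset.univ) => by
    rw [hF j, Finset.sum_pow_eq_sum_piAntidiag]]
  rw [Finset.prod_univ_sum, map_sum]
  -- step 3 : compute the coefficient of each summand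
  have hterm : ∀ p ∈ Fintype.piFinset (fun j => (S j).piAntidiag (k j)),
      MvPowerSeries.coeff d
          (∏ j, (Nat.multinomial (S j) (p j) : MvPowerSeries (Fin n) ℂ) *
            ∏ i ∈ S j, MvPowerSeries.X i ^ p j i) =
        (∏ j, (Nat.multinomial (S j) (p j) : ℂ)) *
          (if (∀ i, (d i : ℕ) = ∑ j, p j i) then 1 else 0) := by
    intro p hp
    simp only [Fintype.mem_piFinset, Finset.mem_piAntidiag] at hp
    have hfull : ∀ j, (∏ i ∈ S j, (MvPowerSeries.X i : MvPowerSeries (Fin n) ℂ) ^ p j i)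
        = ∏ i, MvPowerSeries.X i ^ p j i := by
      intro j
      refine Finset.prod_subset (Finset.subset_univ _) fun i _ hi => ?_
      have : p j i = 0 := by by_contra h; exact hi ((hp j).2 i h)
      rw [this, pow_zero]
    rw [Finset.prod_mul_distrib]
    rw [Finset.prod_congr rfl fun j _ => hfull j, Finset.prod_comm]
    rw [Finset.prod_congr rfl fun i (_ : i ∈ Finset.univ) =>
      Finset.prod_pow_eq_pow_sum Finset.univ (fun j => p j i) _]
    rw [prod_X_pow, ← Nat.cast_prod, ← map_natCast (MvPowerSeries.C (σ := Fin n) (R := ℂ)),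
      MvPowerSeries.coeff_C_mul, MvPowerSeries.coeff_monomial]
    congr 1
    · push_cast; ring
    · congr 1
      rw [eq_iff_iff]
      constructor
      · intro h i
        rw [h]
        exact sum_single_apply (fun i => ∑ j, p j i) i
      · intro h
        refine Finsupp.ext fun i => ?_
        rw [sum_single_apply]
        exact h i
  rw [Finset.sum_congr rfl hterm]
  -- step 4 : identify the unique nonvanishing term
  have key : ∀ p ∈ Fintype.piFinset (fun j => (S j).piAntidiag (k j)),
      (∀ i, (d i : ℕ) = ∑ j, p j i) →
      (p = fun j i => d i * b j i) ∧ (∀ j, k j = ∑ i, d i * b j i) ∧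
        (∀ i, d i ≠ 0 → ∃ j, b j i ≠ 0) := by
    intro p hp hE
    simp only [Fintype.mem_piFinset, Finset.mem_piAntidiag] at hp
    have hsupp : ∀ j i, p j i ≠ 0 → b j i ≠ 0 := fun j i h => (hmemS j i).1 ((hp j).2 i h)
    have hpeq : p = fun j i => d i * b j i := by
      funext j i
      by_cases hbji : b j i = 0
      · have hpji : p j i = 0 := by
          by_contra h; exact (hsupp j i h) hbji
        simp [hpji, hbji]
      · have hb1' : b j i = 1 := le_antisymm (hb1 j i) (Nat.one_le_iff_ne_zero.2 hbji)
        have hothers : ∀ j' ∈ Finset.univ, j' ≠ j → p j' i = 0 := by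
          intro j' _ hj'
          by_contra h
          exact hdisj2 i j' j hj' (hsupp j' i h) hbji
        have hdi : d i = p j i := by
          rw [hE i, Finset.sum_eq_single j hothers (fun h => absurd (Finset.mem_univ j) h)]
        rw [hb1', mul_one, ← hdi]
    refine ⟨hpeq, fun j => ?_, fun i hi => ?_⟩
    · rw [← (hp j).1]
      have : ∀ i ∈ S j, p j i = d i * b j i := fun i _ => by rw [hpeq]
      rw [Finset.sum_congr rfl this]
      refine Finset.sum_subset (Finset.subset_univ _) fun i _ hi => ?_
      have : b j i = 0 := by
        by_contra h; exact hi ((hmemS j i).2 h)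
      rw [this, mul_zero]
    · have hne : ∑ j, p j i ≠ 0 := by rw [← hE i]; exact hi
      obtain ⟨j, _, hj⟩ := Finset.exists_ne_zero_of_sum_ne_zero hne
      exact ⟨j, hsupp j i hj⟩
  by_cases hC : (∀ j, k j = ∑ i, d i * b j i) ∧ (∀ i, d i ≠ 0 → ∃ j, b j i ≠ 0)
  · rw [if_pos hC]
    obtain ⟨hk, hcov⟩ := hC
    set pstar : Fin m → Fin n → ℕ := fun j i => d i * b j i with hpstar
    have hsumb : ∀ i, d i ≠ 0 → ∑ j, b j i = 1 := by
      intro i hi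
      obtain ⟨j, hj⟩ := hcov i hi
      refine le_antisymm (hb i) ?_
      calc 1 ≤ b j i := Nat.one_le_iff_ne_zero.2 hj
        _ ≤ ∑ j', b j' i := Finset.single_le_sum (f := fun j' => b j' i)
            (fun _ _ => Nat.zero_le _) (Finset.mem_univ j)
    have hsumstar : ∀ j, (S j).sum (pstar j) = k j := by
      intro j
      rw [hk j]
      refine Finset.sum_subset (Finset.subset_univ _) fun i _ hi => ?_
      have : b j i = 0 := by by_contra h; exact hi ((hmemS j i).2 h)
      rw [this, mul_zero]
    have hmem : pstar ∈ Fintype.piFinset (fun j => (S j).piAntidiag (k j)) := by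
      rw [Fintype.mem_piFinset]
      intro j
      rw [Finset.mem_piAntidiag]
      refine ⟨hsumstar j, fun i hi => ?_⟩
      refine (hmemS j i).2 fun h => ?_
      rw [hpstar] at hi; simp [h] at hi
    have hEstar : ∀ i, (d i : ℕ) = ∑ j, pstar j i := by
      intro i
      by_cases hdi : d i = 0
      · simp [hpstar, hdi]
      · rw [hpstar]
        simp only
        rw [← Finset.mul_sum, hsumb i hdi, mul_one]
    rw [Finset.sum_eq_single pstar]
    · rw [if_pos hEstar, mul_one]
      have hmult : ∀ j, (Nat.multinomial (S j) (pstar j) : ℂ) =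
          ((k j).factorial : ℂ) * ∏ i ∈ S j, (((d i).factorial : ℂ))⁻¹ := by
        intro j
        have hspec := Nat.multinomial_spec (S j) (pstar j)
        rw [show (S j).sum (pstar j) = k j from hsumstar j] at hspec
        have hprod : (∏ i ∈ S j, (pstar j i).factorial) = ∏ i ∈ S j, (d i).factorial :=
          Finset.prod_congr rfl fun i hi => by
            show (d i * b j i).factorial = (d i).factorial
            rw [hbS j i hi, mul_one]
        rw [hprod] at hspec
        have hcast : (∏ i ∈ S j, ((d i).factorial : ℂ)) *
            (Nat.multinomial (S j) (pstar j) : ℂ) = ((k j).factorial : ℂ) := by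
          exact_mod_cast congrArg (fun t : ℕ => (t : ℂ)) hspec
        have hne : (∏ i ∈ S j, ((d i).factorial : ℂ)) ≠ 0 :=
          Finset.prod_ne_zero_iff.2 fun i _ => Nat.cast_ne_zero.2 (Nat.factorial_ne_zero _)
        rw [← hcast, Finset.prod_inv_distrib,
          mul_comm (∏ i ∈ S j, ((d i).factorial : ℂ))
            (Nat.multinomial (S j) (pstar j) : ℂ),
          mul_assoc, mul_inv_cancel₀ hne, mul_one]
      rw [Finset.prod_congr rfl fun j (_ : j ∈ Finset.univ) => hmult j,
        Finset.prod_mul_distrib]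
      congr 1
      have hdisjS : (↑(Finset.univ : Finset (Fin m)) : Set (Fin m)).PairwiseDisjoint S := by
        intro j _ j' _ hne
        exact Finset.disjoint_left.2 fun i hi hi' =>
          hdisj2 i j j' hne ((hmemS j i).1 hi) ((hmemS j' i).1 hi')
      rw [← Finset.prod_biUnion hdisjS]
      refine Finset.prod_subset (Finset.subset_univ _) fun i _ hi => ?_
      have hdi : d i = 0 := by
        by_contra h
        obtain ⟨j, hj⟩ := hcov i h
        exact hi (Finset.mem_biUnion.2 ⟨j, Finset.mem_univ j, (hmemS j i).2 hj⟩)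
      rw [hdi]
      norm_num
    · intro p hp hne
      rw [if_neg, mul_zero]
      intro hE
      exact hne ((key p hp hE).1)
    · intro h
      exact absurd hmem h
  · rw [if_neg hC]
    refine Finset.sum_eq_zero fun p hp => ?_
    rw [if_neg, mul_zero]
    intro hE
    exact hC ⟨(key p hp hE).2.1, (key p hp hE).2.2⟩

lemma lemA {n m : ℕ} (z : List ℕ → ℂ) (b : Fin m → Fin n → ℕ)
    (hb : ∀ i, ∑ j, b j i ≤ 1) (d : Fin n →₀ ℕ) :
    MvPowerSeries.coeff d (Zstar z (List.ofFn fun j => Ff n (b j))) =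
      if (∀ i, d i ≠ 0 → ∃ j, b j i ≠ 0)
      then z (List.ofFn fun j => ∑ i, d i * b j i) *
        ∏ i, ((-1 : ℂ) ^ (d i) * (((d i).factorial : ℂ))⁻¹)
      else 0 := by
  classical
  have hb1 : ∀ j i, b j i ≤ 1 := fun j i =>
    le_trans (Finset.single_le_sum (f := fun j => b j i) (fun _ _ => Nat.zero_le _)
      (Finset.mem_univ j)) (hb i)
  rw [coeff_Zstar_ofFn]
  have hterm : ∀ k : Fin m → ℕ,
      MvPowerSeries.coeff d (∏ j, (((k j).factorial : ℂ))⁻¹ • (-(Ff n (b j))) ^ (k j)) =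
        (∏ j, ((((k j).factorial : ℂ))⁻¹ * (-1 : ℂ) ^ (k j))) *
          (if (∀ j, k j = ∑ i, d i * b j i) ∧ (∀ i, d i ≠ 0 → ∃ j, b j i ≠ 0)
           then (∏ j, ((k j).factorial : ℂ)) * ∏ i, (((d i).factorial : ℂ))⁻¹ else 0) := by
    intro k
    have h1 : ∀ j : Fin m, (((k j).factorial : ℂ))⁻¹ • (-(Ff n (b j))) ^ (k j)
        = MvPowerSeries.C ((((k j).factorial : ℂ))⁻¹ * (-1 : ℂ) ^ (k j)) *
          (Ff n (b j)) ^ (k j) := by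
      intro j
      have h2 : (-(Ff n (b j))) ^ (k j) = ((-1 : ℂ) ^ (k j)) • (Ff n (b j)) ^ (k j) := by
        rw [← smul_pow, neg_smul, one_smul]
      rw [h2, smul_smul, MvPowerSeries.smul_eq_C_mul]
    rw [Finset.prod_congr rfl fun j (_ : j ∈ Finset.univ) => h1 j, Finset.prod_mul_distrib,
      ← map_prod, MvPowerSeries.coeff_C_mul, coeff_prod_pow b hb k d]
  rw [Finset.sum_congr rfl fun k _ => by rw [hterm k]]
  by_cases hcov : (∀ i, d i ≠ 0 → ∃ j, b j i ≠ 0)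
  · rw [if_pos hcov]
    set kstar : Fin m → ℕ := fun j => ∑ i, d i * b j i with hkstar
    rw [Finset.sum_eq_single kstar]
    · rw [if_pos ⟨fun j => rfl, hcov⟩]
      have hsign : (∏ j, (-1 : ℂ) ^ (kstar j)) = ∏ i, (-1 : ℂ) ^ (d i : ℕ) := by
        rw [Finset.prod_pow_eq_pow_sum, Finset.prod_pow_eq_pow_sum]
        congr 1
        rw [hkstar]
        rw [Finset.sum_comm]
        refine Finset.sum_congr rfl fun i _ => ?_
        rw [← Finset.mul_sum]
        by_cases hdi : d i = 0
        · rw [hdi, zero_mul]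
        · obtain ⟨j, hj⟩ := hcov i hdi
          have h1 : 1 ≤ ∑ j', b j' i :=
            le_trans (Nat.one_le_iff_ne_zero.2 hj)
              (Finset.single_le_sum (f := fun j' => b j' i) (fun _ _ => Nat.zero_le _)
                (Finset.mem_univ j))
          have : ∑ j', b j' i = 1 := le_antisymm (hb i) h1
          rw [this, mul_one]
      rw [Finset.prod_mul_distrib, Finset.prod_inv_distrib, hsign, Finset.prod_mul_distrib]
      have hane : (∏ j, (((kstar j).factorial : ℂ))) ≠ 0 :=
        Finset.prod_ne_zero_iff.2 fun j _ => Nat.cast_ne_zero.2 (Nat.factorial_ne_zero _)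
      congr 1
      have heq : ((∏ j, (((kstar j).factorial : ℂ)))⁻¹ * (∏ i, (-1 : ℂ) ^ (d i : ℕ))) *
          ((∏ j, (((kstar j).factorial : ℂ))) * ∏ i, (((d i).factorial : ℂ))⁻¹) =
          ((∏ j, (((kstar j).factorial : ℂ)))⁻¹ * (∏ j, (((kstar j).factorial : ℂ)))) *
            ((∏ i, (-1 : ℂ) ^ (d i : ℕ)) * ∏ i, (((d i).factorial : ℂ))⁻¹) := by
        ring
      rw [heq, inv_mul_cancel₀ hane, one_mul]
    · intro k _ hne
      rw [if_neg, mul_zero, mul_zero]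
      intro hcond
      exact hne (funext fun j => (hcond.1 j).symm ▸ rfl)
    · intro h
      exfalso
      apply h
      rw [Fintype.mem_piFinset]
      intro j
      rw [Finset.mem_range, Nat.lt_succ_iff]
      calc kstar j = ∑ i, d i * b j i := rfl
        _ ≤ ∑ i, d i * 1 := Finset.sum_le_sum fun i _ =>
            Nat.mul_le_mul_left (d i) (hb1 j i)
        _ = ∑ i, d i := by simp
  · rw [if_neg hcov]
    refine Finset.sum_eq_zero fun k _ => ?_
    rw [if_neg fun hcond => hcov hcond.2, mul_zero, mul_zero]

lemma list_sum_apply' {n : ℕ} (l : List (Fin n → ℕ)) (i : Fin n) :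
    l.sum i = (∑ j : Fin l.length, l.get j i) := by
  conv_lhs => rw [← List.ofFn_get l]
  rw [List.sum_ofFn, Finset.sum_apply]

lemma lemA' {n : ℕ} (z : List ℕ → ℂ) (β : List (Fin n → ℕ))
    (hβ : ∀ i, ∑ j : Fin β.length, β.get j i = 1) (d : Fin n →₀ ℕ) :
    MvPowerSeries.coeff d (Zstar z (β.map (Ff n))) =
      z (β.map fun c => ∑ i, d i * c i) *
        ∏ i, ((-1 : ℂ) ^ (d i : ℕ) * (((d i).factorial : ℂ))⁻¹) := by
  have h1 : β.map (Ff n) = List.ofFn (fun j => Ff n (β.get j)) := by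
    conv_lhs => rw [← List.ofFn_get β]
    rw [List.map_ofFn]
    rfl
  have h2 : (β.map fun c => ∑ i, d i * c i) = List.ofFn (fun j => ∑ i, d i * β.get j i) := by
    conv_lhs => rw [← List.ofFn_get β]
    rw [List.map_ofFn]
    rfl
  rw [h1, h2, lemA z (fun j => β.get j) (fun i => le_of_eq (hβ i)) d, if_pos]
  intro i _
  by_contra hno
  push_neg at hno
  exact one_ne_zero ((hβ i).symm.trans (Finset.sum_eq_zero fun j _ => hno j))


/-- `Z_*` turns the quasi-shuffle product into multiplication:
`Z_*(X₁,…,X_r)·Z_*(X_{r+1},…,X_{r+s}) = ∑_{α ∈ qs [X₁,…,X_r] [X_{r+1},…,X_{r+s}]} Z_*(α)`. -/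
theorem Zstar_mul_Zstar (z : List ℕ → ℂ) (hz1 : z [] = 1)
    (hz : ∀ w w' : List ℕ, z w * z w' = ((qs w w').map z).sum)
    (r s : ℕ) (hr : 1 ≤ r) (hs : 1 ≤ s) :
    Zstar z (List.ofFn fun j : Fin r => MvPowerSeries.X (Fin.castAdd s j)) *
        Zstar z (List.ofFn fun j : Fin s => MvPowerSeries.X (Fin.natAdd r j)) =
      ((qs (List.ofFn fun j : Fin r => (MvPowerSeries.X (Fin.castAdd s j) : MvPowerSeries (Fin (r + s)) ℂ))
            (List.ofFn fun j : Fin s => MvPowerSeries.X (Fin.natAdd r j))).map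
          (Zstar z)).sum := by
  classical
  set b1 : Fin r → Fin (r + s) → ℕ := fun j => Pi.single (Fin.castAdd s j) 1 with hb1def
  set b2 : Fin s → Fin (r + s) → ℕ := fun j => Pi.single (Fin.natAdd r j) 1 with hb2def
  have hb1ne : ∀ (j : Fin r) (i : Fin (r + s)), b1 j i ≠ 0 ↔ i = Fin.castAdd s j := by
    intro j i; simp [hb1def, Pi.single_apply]
  have hb2ne : ∀ (j : Fin s) (i : Fin (r + s)), b2 j i ≠ 0 ↔ i = Fin.natAdd r j := by
    intro j i; simp [hb2def, Pi.single_apply]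
  have htot : ∀ i : Fin (r + s), (∑ j, b1 j i) + (∑ j, b2 j i) = 1 := by
    intro i
    have h := Fin.sum_univ_add (f := fun i' : Fin (r + s) => Pi.single i' (1 : ℕ) i)
    rw [← h]
    simp [Pi.single_apply]
  have hXl : (List.ofFn fun j : Fin r =>
        (MvPowerSeries.X (Fin.castAdd s j) : MvPowerSeries (Fin (r + s)) ℂ)) =
      List.map (⇑(Ff (r + s))) (List.ofFn b1) := by
    rw [List.map_ofFn]
    congr 1
    funext j
    exact (Ff_single _).symm
  have hXr : (List.ofFn fun j : Fin s =>
        (MvPowerSeries.X (Fin.natAdd r j) : MvPowerSeries (Fin (r + s)) ℂ)) =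
      List.map (⇑(Ff (r + s))) (List.ofFn b2) := by
    rw [List.map_ofFn]
    congr 1
    funext j
    exact (Ff_single _).symm
  apply MvPowerSeries.ext
  intro d
  set w1 : List ℕ := List.ofFn (fun j : Fin r => d (Fin.castAdd s j)) with hw1
  set w2 : List ℕ := List.ofFn (fun j : Fin s => d (Fin.natAdd r j)) with hw2
  set Pd : ℂ := ∏ i, ((-1 : ℂ) ^ (d i : ℕ) * (((d i).factorial : ℂ))⁻¹) with hPd
  -- right-hand side
  have hRHS : MvPowerSeries.coeff d
      (((qs (List.ofFn fun j : Fin r =>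
            (MvPowerSeries.X (Fin.castAdd s j) : MvPowerSeries (Fin (r + s)) ℂ))
          (List.ofFn fun j : Fin s => MvPowerSeries.X (Fin.natAdd r j))).map (Zstar z)).sum) =
      ((qs w1 w2).map z).sum * Pd := by
    rw [hXl, hXr, qs_map (Ff (r + s)) (List.ofFn b1) (List.ofFn b2)]
    rw [map_multiset_sum, Multiset.map_map, Multiset.map_map]
    have hmapeq : ∀ β ∈ qs (List.ofFn b1) (List.ofFn b2),
        MvPowerSeries.coeff d (Zstar z (List.map (⇑(Ff (r + s))) β)) =
          z (List.map (⇑(Gd d)) β) * Pd := by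
      intro β hm
      have hsum1 : ∀ i, ∑ j : Fin β.length, β.get j i = 1 := by
        intro i
        have h := qs_sum (List.ofFn b1) (List.ofFn b2) β hm
        calc ∑ j : Fin β.length, β.get j i = β.sum i := (list_sum_apply' β i).symm
          _ = (List.ofFn b1).sum i + (List.ofFn b2).sum i := by rw [h]; rfl
          _ = (∑ j, b1 j i) + (∑ j, b2 j i) := by
              rw [List.sum_ofFn, List.sum_ofFn, Finset.sum_apply, Finset.sum_apply]
          _ = 1 := htot i
      exact lemA' z β hsum1 d
    have hmc : Multiset.map ((⇑(MvPowerSeries.coeff d) ∘ Zstar z) ∘ List.map ⇑(Ff (r + s)))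
        (qs (List.ofFn b1) (List.ofFn b2)) =
        Multiset.map (fun β => z (List.map (⇑(Gd d)) β) * Pd)
          (qs (List.ofFn b1) (List.ofFn b2)) :=
      Multiset.map_congr rfl fun β h => hmapeq β h
    rw [hmc, Multiset.sum_map_mul_right]
    congr 1
    have hcomp : (Multiset.map (fun β => z (List.map (⇑(Gd d)) β))
          (qs (List.ofFn b1) (List.ofFn b2))) =
        ((qs (List.ofFn b1) (List.ofFn b2)).map (List.map ⇑(Gd d))).map z := by
      rw [Multiset.map_map]
      rfl
    rw [hcomp, ← qs_map (Gd d) (List.ofFn b1) (List.ofFn b2)]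
    have e1 : List.map (⇑(Gd d)) (List.ofFn b1) = w1 := by
      rw [List.map_ofFn, hw1]
      congr 1
      funext j
      exact Gd_single d _
    have e2 : List.map (⇑(Gd d)) (List.ofFn b2) = w2 := by
      rw [List.map_ofFn, hw2]
      congr 1
      funext j
      exact Gd_single d _
    rw [e1, e2]
  -- left-hand side
  have hc1 : ∀ e : Fin (r + s) →₀ ℕ,
      MvPowerSeries.coeff e (Zstar z (List.ofFn fun j : Fin r =>
          (MvPowerSeries.X (Fin.castAdd s j) : MvPowerSeries (Fin (r + s)) ℂ))) =
        if (∀ i, e i ≠ 0 → ∃ j : Fin r, b1 j i ≠ 0)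
        then z (List.ofFn fun j : Fin r => e (Fin.castAdd s j)) *
          ∏ i, ((-1 : ℂ) ^ (e i : ℕ) * (((e i).factorial : ℂ))⁻¹)
        else 0 := by
    intro e
    rw [show (List.ofFn fun j : Fin r =>
          (MvPowerSeries.X (Fin.castAdd s j) : MvPowerSeries (Fin (r + s)) ℂ)) =
        List.ofFn (fun j => Ff (r + s) (b1 j)) from by
      congr 1; funext j; exact (Ff_single _).symm]
    rw [lemA z b1 (fun i => by have := htot i; omega) e]
    have harg : (fun j : Fin r => ∑ i, e i * b1 j i) =
        fun j : Fin r => e (Fin.castAdd s j) := funext fun j => Gd_single e _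
    rw [harg]
  have hc2 : ∀ f : Fin (r + s) →₀ ℕ,
      MvPowerSeries.coeff f (Zstar z (List.ofFn fun j : Fin s =>
          (MvPowerSeries.X (Fin.natAdd r j) : MvPowerSeries (Fin (r + s)) ℂ))) =
        if (∀ i, f i ≠ 0 → ∃ j : Fin s, b2 j i ≠ 0)
        then z (List.ofFn fun j : Fin s => f (Fin.natAdd r j)) *
          ∏ i, ((-1 : ℂ) ^ (f i : ℕ) * (((f i).factorial : ℂ))⁻¹)
        else 0 := by
    intro f
    rw [show (List.ofFn fun j : Fin s =>
          (MvPowerSeries.X (Fin.natAdd r j) : MvPowerSeries (Fin (r + s)) ℂ)) =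
        List.ofFn (fun j => Ff (r + s) (b2 j)) from by
      congr 1; funext j; exact (Ff_single _).symm]
    rw [lemA z b2 (fun i => by have := htot i; omega) f]
    have harg : (fun j : Fin s => ∑ i, f i * b2 j i) =
        fun j : Fin s => f (Fin.natAdd r j) := funext fun j => Gd_single f _
    rw [harg]
  have hLHS : MvPowerSeries.coeff d
      (Zstar z (List.ofFn fun j : Fin r => MvPowerSeries.X (Fin.castAdd s j)) *
        Zstar z (List.ofFn fun j : Fin s => MvPowerSeries.X (Fin.natAdd r j))) =
      z w1 * z w2 * Pd := by
    rw [MvPowerSeries.coeff_mul]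
    rw [Finset.sum_congr rfl fun p (_ : p ∈ Finset.HasAntidiagonal.antidiagonal d) => by
      rw [hc1 p.1, hc2 p.2]]
    set estar : Fin (r + s) →₀ ℕ := Finsupp.filter (fun i : Fin (r + s) => (i : ℕ) < r) d
      with hestar
    set fstar : Fin (r + s) →₀ ℕ := Finsupp.filter (fun i : Fin (r + s) => ¬ (i : ℕ) < r) d
      with hfstar
    have hestar_apply : ∀ i : Fin (r + s), estar i = if (i : ℕ) < r then d i else 0 := by
      intro i; rw [hestar, Finsupp.filter_apply]
    have hfstar_apply : ∀ i : Fin (r + s), fstar i = if ¬ (i : ℕ) < r then d i else 0 := by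
      intro i; rw [hfstar, Finsupp.filter_apply]
    rw [Finset.sum_eq_single (estar, fstar)]
    · have hcov1 : ∀ i, estar i ≠ 0 → ∃ j : Fin r, b1 j i ≠ 0 := by
        intro i hi
        rw [hestar_apply] at hi
        by_cases hir : (i : ℕ) < r
        · refine ⟨⟨(i : ℕ), hir⟩, ?_⟩
          rw [hb1ne]
          exact Fin.ext (by simp)
        · simp [hir] at hi
      have hcov2 : ∀ i, fstar i ≠ 0 → ∃ j : Fin s, b2 j i ≠ 0 := by
        intro i hi
        rw [hfstar_apply] at hi
        by_cases hir : (i : ℕ) < r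
        · simp [hir] at hi
        · refine ⟨⟨(i : ℕ) - r, by omega⟩, ?_⟩
          rw [hb2ne]
          refine Fin.ext ?_
          simp
          omega
      rw [if_pos hcov1, if_pos hcov2]
      have he1 : (List.ofFn fun j : Fin r => estar (Fin.castAdd s j)) = w1 := by
        rw [hw1]
        congr 1
        funext j
        rw [hestar_apply]
        simp [Fin.is_lt]
      have he2 : (List.ofFn fun j : Fin s => fstar (Fin.natAdd r j)) = w2 := by
        rw [hw2]
        congr 1
        funext j
        rw [hfstar_apply]
        have : ¬ ((Fin.natAdd r j : Fin (r + s)) : ℕ) < r := by simp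
        simp [this]
      have hP : (∏ i, ((-1 : ℂ) ^ (estar i : ℕ) * (((estar i).factorial : ℂ))⁻¹)) *
          (∏ i, ((-1 : ℂ) ^ (fstar i : ℕ) * (((fstar i).factorial : ℂ))⁻¹)) = Pd := by
        rw [← Finset.prod_mul_distrib, hPd]
        refine Finset.prod_congr rfl fun i _ => ?_
        by_cases hir : (i : ℕ) < r
        · rw [hestar_apply, hfstar_apply]
          simp [hir]
        · rw [hestar_apply, hfstar_apply]
          simp [hir]
      rw [he1, he2]
      calc (z w1 * (∏ i, ((-1 : ℂ) ^ (estar i : ℕ) * (((estar i).factorial : ℂ))⁻¹))) *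
            (z w2 * (∏ i, ((-1 : ℂ) ^ (fstar i : ℕ) * (((fstar i).factorial : ℂ))⁻¹))) =
          z w1 * z w2 * ((∏ i, ((-1 : ℂ) ^ (estar i : ℕ) * (((estar i).factorial : ℂ))⁻¹)) *
            (∏ i, ((-1 : ℂ) ^ (fstar i : ℕ) * (((fstar i).factorial : ℂ))⁻¹))) := by ring
        _ = z w1 * z w2 * Pd := by rw [hP]
    · intro p hp hne
      obtain ⟨e, f⟩ := p
      rw [Finset.HasAntidiagonal.mem_antidiagonal] at hp
      by_cases h1 : (∀ i, e i ≠ 0 → ∃ j : Fin r, b1 j i ≠ 0)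
      · by_cases h2 : (∀ i, f i ≠ 0 → ∃ j : Fin s, b2 j i ≠ 0)
        · exfalso
          apply hne
          have hef : ∀ i : Fin (r + s), e i + f i = d i := by
            intro i
            have := DFunLike.congr_fun hp i
            rwa [Finsupp.add_apply] at this
          have he0 : ∀ i : Fin (r + s), ¬ (i : ℕ) < r → e i = 0 := by
            intro i hir
            by_contra h
            obtain ⟨j, hj⟩ := h1 i h
            rw [hb1ne] at hj
            have := congrArg Fin.val hj
            simp at this
            omega
          have hf0 : ∀ i : Fin (r + s), (i : ℕ) < r → f i = 0 := by
            intro i hir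
            by_contra h
            obtain ⟨j, hj⟩ := h2 i h
            rw [hb2ne] at hj
            have := congrArg Fin.val hj
            simp at this
            omega
          have he : e = estar := by
            ext i
            rw [hestar_apply]
            by_cases hir : (i : ℕ) < r
            · have := hef i
              have := hf0 i hir
              simp [hir]
              omega
            · simp [hir, he0 i hir]
          have hf : f = fstar := by
            ext i
            rw [hfstar_apply]
            by_cases hir : (i : ℕ) < r
            · simp [hir, hf0 i hir]
            · have := hef i
              have := he0 i hir
              simp [hir]
              omega
          rw [he, hf]
        · rw [if_neg h2, mul_zero]
      · rw [if_neg h1, zero_mul]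
    · intro habs
      exfalso
      apply habs
      rw [Finset.HasAntidiagonal.mem_antidiagonal]
      exact Finsupp.filter_pos_add_filter_neg d _
  rw [hLHS, hRHS, hz w1 w2]
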